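/- Let the linear system ẋ = Ax + Bu, y = Cx + Du be positive, i.e. A ∈ ℝ^{n×n} is Metzler and B ∈ ℝ^{n×m}, C ∈ ℝ^{p×n}, D ∈ ℝ^{p×m} are entrywise nonnegative. Let ξ ≥ 0 and assume A + ξI is Hurwitz, and let r ∈ ℝ^m and q ∈ ℝ^p be entrywise nonnegative. If r^⊤ − q^⊤G(−ξ) ≥ 0 componentwise, where G(−ξ) := C(−ξI − A)^{-1}B + D, then there exist entrywise nonnegative vectors p, l ∈ ℝ^n and k ∈ ℝ^m satisfying p^⊤A + ξp^⊤ + q^⊤C + l^⊤ = 0 and p^⊤B + q^⊤D − r^⊤ + k^⊤ = 0; indeed one may take p^⊤ := q^⊤C(−(A + ξI))^{-1}, l := 0 and k := r − G(−ξ)^⊤q. -/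

import Mathlib

open Matrix

noncomputable section

/-- A square real matrix is Metzler if all its off-diagonal entries are nonnegative. -/
def IsMetzler {n : ℕ} (A : Matrix (Fin n) (Fin n) ℝ) : Prop :=
  ∀ i j, i ≠ j → 0 ≤ A i j

/-- A square real matrix is Hurwitz if every (complex) eigenvalue has negative real part. -/
def IsHurwitz {n : ℕ} (A : Matrix (Fin n) (Fin n) ℝ) : Prop :=
  ∀ μ ∈ spectrum ℂ (A.map (fun a => (a : ℂ))), μ.re < 0

open Filter Topology

lemma exists_eig {n : ℕ} (M : Matrix (Fin n) (Fin n) ℂ) (μ : ℂ)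
    (h : μ ∈ spectrum ℂ M) : ∃ v : Fin n → ℂ, v ≠ 0 ∧ M.mulVec v = μ • v := by
  rw [spectrum.mem_iff] at h
  have hdet : (algebraMap ℂ (Matrix (Fin n) (Fin n) ℂ) μ - M).det = 0 := by
    by_contra hd
    exact h ((Matrix.isUnit_iff_isUnit_det _).mpr (Ne.isUnit hd))
  obtain ⟨v, hv0, hv⟩ := (Matrix.exists_mulVec_eq_zero_iff).mpr hdet
  refine ⟨v, hv0, ?_⟩
  have := hv
  rw [Matrix.sub_mulVec] at this
  have halg : (algebraMap ℂ (Matrix (Fin n) (Fin n) ℂ) μ).mulVec v = μ • v := by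
    ext i
    simp [Matrix.algebraMap_matrix_apply, Matrix.mulVec, dotProduct, Finset.sum_ite_eq,
      mul_comm]
  rw [halg] at this
  have := sub_eq_zero.mp this
  exact this.symm

def simplex (n : ℕ) : Set (Fin n → ℝ) := {x | (∀ i, 0 ≤ x i) ∧ ∑ i, x i = 1}

lemma simplex_compact (n : ℕ) : IsCompact (simplex n) := by
  have hclosed : IsClosed (simplex n) := by
    have h1 : IsClosed {x : Fin n → ℝ | ∀ i, 0 ≤ x i} := by
      have : {x : Fin n → ℝ | ∀ i, 0 ≤ x i} = ⋂ i, {x | 0 ≤ x i} := by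
        ext x; simp
      rw [this]
      exact isClosed_iInter fun i => isClosed_le continuous_const (continuous_apply i)
    have h2 : IsClosed {x : Fin n → ℝ | ∑ i, x i = 1} :=
      isClosed_eq (by continuity) continuous_const
    exact h1.inter h2
  have hbdd : simplex n ⊆ Metric.closedBall 0 1 := by
    intro x ⟨hx0, hxs⟩
    rw [Metric.mem_closedBall, dist_zero_right, pi_norm_le_iff_of_nonneg zero_le_one]
    intro i
    rw [Real.norm_eq_abs, abs_of_nonneg (hx0 i)]
    calc x i ≤ ∑ j, x j := Finset.single_le_sum (fun j _ => hx0 j) (Finset.mem_univ i)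
    _ = 1 := hxs
  exact (isCompact_closedBall 0 1).of_isClosed_subset hclosed hbdd

lemma mulVec_cont {n : ℕ} (Q : Matrix (Fin n) (Fin n) ℝ) (i : Fin n) :
    Continuous fun x : Fin n → ℝ => Q.mulVec x i := by
  simp only [Matrix.mulVec, dotProduct]
  exact continuous_finset_sum _ fun j _ => (continuous_const.mul (continuous_apply j))

/-- Perron–Frobenius for strictly positive matrices, Collatz–Wielandt style. -/
lemma pf_pos {n : ℕ} (Q : Matrix (Fin n) (Fin n) ℝ) (hQ : ∀ i j, 0 < Q i j)
    (t0 : ℝ) (x0 : Fin n → ℝ) (hx0 : x0 ∈ simplex n)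
    (h0 : ∀ i, t0 * x0 i ≤ Q.mulVec x0 i) :
    ∃ t x, t0 ≤ t ∧ x ∈ simplex n ∧ Q.mulVec x = t • x := by
  classical
  have hne : Nonempty (Fin n) := by
    rcases Nat.eq_zero_or_pos n with h | h
    · exfalso; have := hx0.2; subst h; simp at this
    · exact ⟨⟨0, h⟩⟩
  set S : Set ℝ := {t | ∃ x ∈ simplex n, ∀ i, t * x i ≤ Q.mulVec x i} with hS
  have ht0S : t0 ∈ S := ⟨x0, hx0, h0⟩
  have hbdd : BddAbove S := by
    refine ⟨∑ i, ∑ j, Q i j, fun t ht => ?_⟩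
    obtain ⟨x, ⟨hx0', hxs⟩, hx⟩ := ht
    obtain ⟨i, -, hi⟩ := Finset.exists_max_image Finset.univ x ⟨Classical.arbitrary _, Finset.mem_univ _⟩
    have hxi : 0 < x i := by
      by_contra hc
      push_neg at hc
      have : ∀ j, x j = 0 := fun j => le_antisymm (le_trans (hi j (Finset.mem_univ j)) (le_trans hc le_rfl)) (hx0' j)
      simp [this] at hxs
    have h1 : t * x i ≤ Q.mulVec x i := hx i
    have h2 : Q.mulVec x i ≤ (∑ j, Q i j) * x i := by
      rw [Finset.sum_mul, Matrix.mulVec, dotProduct]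
      exact Finset.sum_le_sum fun j _ => mul_le_mul_of_nonneg_left (hi j (Finset.mem_univ j)) (hQ i j).le
    have h3 : t ≤ ∑ j, Q i j := le_of_mul_le_mul_right (h1.trans h2) hxi
    calc t ≤ ∑ j, Q i j := h3
    _ ≤ ∑ i', ∑ j, Q i' j :=
        Finset.single_le_sum (f := fun i' => ∑ j, Q i' j)
          (fun i' _ => Finset.sum_nonneg fun j _ => (hQ i' j).le) (Finset.mem_univ i)
  set T := sSup S with hT
  have hTt0 : t0 ≤ T := le_csSup hbdd ht0S
  -- attainment
  obtain ⟨u, -, hulim, huS⟩ := exists_seq_tendsto_sSup ⟨t0, ht0S⟩ hbdd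
  choose xs hxsΔ hxsI using huS
  obtain ⟨xl, hxlΔ, φ, hφ, hxl⟩ := (simplex_compact n).tendsto_subseq hxsΔ
  have hattain : ∀ i, T * xl i ≤ Q.mulVec xl i := by
    intro i
    have hl1 : Tendsto (fun k => u (φ k) * xs (φ k) i) atTop (𝓝 (T * xl i)) :=
      Tendsto.mul (hulim.comp hφ.tendsto_atTop)
        ((continuous_apply i).continuousAt.tendsto.comp hxl)
    have hl2 : Tendsto (fun k => Q.mulVec (xs (φ k)) i) atTop (𝓝 (Q.mulVec xl i)) :=
      ((mulVec_cont Q i).continuousAt.tendsto).comp hxl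
    exact le_of_tendsto_of_tendsto' hl1 hl2 fun k => hxsI (φ k) i
  -- show equality
  by_cases hy : Q.mulVec xl = T • xl
  · exact ⟨T, xl, hTt0, hxlΔ, hy⟩
  exfalso
  set y := Q.mulVec xl - T • xl with hy'
  have hy0 : ∀ i, 0 ≤ y i := fun i => by simp [hy', sub_nonneg, hattain i]
  have hyne : y ≠ 0 := fun hc => hy (by rwa [sub_eq_zero] at hc)
  have hpos : ∀ (w : Fin n → ℝ), (∀ i, 0 ≤ w i) → w ≠ 0 → ∀ i, 0 < Q.mulVec w i := by
    intro w hw hwne i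
    obtain ⟨j, hj⟩ : ∃ j, 0 < w j := by
      by_contra hc
      push_neg at hc
      exact hwne (funext fun j => le_antisymm (hc j) (hw j))
    calc (0:ℝ) < Q i j * w j := mul_pos (hQ i j) hj
    _ ≤ ∑ l, Q i l * w l :=
        Finset.single_le_sum (f := fun l => Q i l * w l)
          (fun l _ => mul_nonneg (hQ i l).le (hw l)) (Finset.mem_univ j)
  have hxlne : xl ≠ 0 := by
    intro hc
    have := hxlΔ.2
    simp [hc] at this
  set z := Q.mulVec xl with hz
  have hzpos : ∀ i, 0 < z i := hpos xl hxlΔ.1 hxlne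
  have hwpos : ∀ i, 0 < Q.mulVec y i := hpos y hy0 hyne
  set δ := Finset.univ.inf' (Finset.univ_nonempty) (fun i => Q.mulVec y i / z i) with hδ
  have hδpos : 0 < δ := by
    rw [hδ, Finset.lt_inf'_iff]
    exact fun i _ => div_pos (hwpos i) (hzpos i)
  have hkey : ∀ i, (T + δ) * z i ≤ Q.mulVec z i := by
    intro i
    have h1 : Q.mulVec z i = T * z i + Q.mulVec y i := by
      have : z = T • xl + y := by rw [hy']; abel
      calc Q.mulVec z i = Q.mulVec (T • xl + y) i := by rw [← this]
      _ = T * Q.mulVec xl i + Q.mulVec y i := by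
          rw [Matrix.mulVec_add, Matrix.mulVec_smul]; simp
      _ = T * z i + Q.mulVec y i := rfl
    have h2 : δ * z i ≤ Q.mulVec y i := by
      have : δ ≤ Q.mulVec y i / z i := Finset.inf'_le _ (Finset.mem_univ i)
      calc δ * z i ≤ (Q.mulVec y i / z i) * z i :=
        mul_le_mul_of_nonneg_right this (hzpos i).le
      _ = Q.mulVec y i := div_mul_cancel₀ _ (hzpos i).ne'
    nlinarith [h1, h2]
  -- normalize z
  set σ := ∑ i, z i with hσ
  have hσpos : 0 < σ := Finset.sum_pos (fun i _ => hzpos i) Finset.univ_nonempty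
  have hTδ : T + δ ∈ S := by
    refine ⟨σ⁻¹ • z, ⟨fun i => by
      simp only [Pi.smul_apply, smul_eq_mul]
      exact mul_nonneg (inv_nonneg.mpr hσpos.le) (hzpos i).le, ?_⟩, ?_⟩
    · simp only [Pi.smul_apply, smul_eq_mul, ← Finset.mul_sum, ← hσ]
      field_simp
    · intro i
      have := hkey i
      have h2 : Q.mulVec (σ⁻¹ • z) i = σ⁻¹ * Q.mulVec z i := by
        rw [Matrix.mulVec_smul]; simp
      rw [h2]
      simp only [Pi.smul_apply, smul_eq_mul]
      rw [mul_comm (T + δ) (σ⁻¹ * z i)]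
      rw [mul_assoc, mul_comm (z i) (T + δ)]
      exact mul_le_mul_of_nonneg_left this (inv_nonneg.mpr hσpos.le)
  have := le_csSup hbdd hTδ
  linarith

/-- Perron–Frobenius-type lemma for nonnegative matrices via perturbation. -/
lemma pf_nonneg {n : ℕ} (P : Matrix (Fin n) (Fin n) ℝ) (hP : ∀ i j, 0 ≤ P i j)
    (t0 : ℝ) (x0 : Fin n → ℝ) (hx0 : x0 ∈ simplex n)
    (h0 : ∀ i, t0 * x0 i ≤ P.mulVec x0 i) :
    ∃ t x, t0 ≤ t ∧ x ∈ simplex n ∧ P.mulVec x = t • x := by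
  classical
  set J : Matrix (Fin n) (Fin n) ℝ := Matrix.of (fun _ _ => (1:ℝ)) with hJ
  have hJmul : ∀ (x : Fin n → ℝ), x ∈ simplex n → ∀ i, J.mulVec x i = 1 := by
    intro x hx i
    simp [hJ, Matrix.mulVec, dotProduct, hx.2]
  set ε : ℕ → ℝ := fun k => 1 / (k + 1) with hε
  have hεpos : ∀ k, 0 < ε k := fun k => by positivity
  set Q : ℕ → Matrix (Fin n) (Fin n) ℝ := fun k => P + ε k • J with hQdef
  have hQpos : ∀ k i j, 0 < Q k i j := by
    intro k i j
    simp only [hQdef, Matrix.add_apply, Matrix.smul_apply, hJ, Matrix.of_apply, smul_eq_mul,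
      mul_one]
    have := hP i j; have := hεpos k; linarith
  have hQmv : ∀ k (x : Fin n → ℝ), x ∈ simplex n → ∀ i,
      (Q k).mulVec x i = P.mulVec x i + ε k := by
    intro k x hx i
    simp only [hQdef, Matrix.add_mulVec, Pi.add_apply, Matrix.smul_mulVec,
      Pi.smul_apply, smul_eq_mul]
    rw [hJmul x hx i, mul_one]
  have hstart : ∀ k i, t0 * x0 i ≤ (Q k).mulVec x0 i := by
    intro k i
    rw [hQmv k x0 hx0 i]
    have := (hεpos k).le
    linarith [h0 i]
  choose ts xs hts hxsΔ hxse using fun k => pf_pos (Q k) (hQpos k) t0 x0 hx0 (hstart k)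
  -- upper bound on ts
  set R : ℝ := (∑ i, ∑ j, P i j) + n with hR
  have htsR : ∀ k, ts k ≤ R := by
    intro k
    have h1 : ts k = ∑ i, ts k * xs k i := by
      rw [← Finset.mul_sum, (hxsΔ k).2, mul_one]
    have h2 : ∀ i, ts k * xs k i = P.mulVec (xs k) i + ε k := by
      intro i
      have := congrFun (hxse k) i
      rw [hQmv k (xs k) (hxsΔ k) i] at this
      simpa [Pi.smul_apply, smul_eq_mul] using this.symm
    have h3 : ∀ i, P.mulVec (xs k) i ≤ ∑ j, P i j := by
      intro i
      rw [Matrix.mulVec, dotProduct]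
      refine Finset.sum_le_sum fun j _ => ?_
      have hxj1 : xs k j ≤ 1 := by
        rw [← (hxsΔ k).2]
        exact Finset.single_le_sum (fun l _ => (hxsΔ k).1 l) (Finset.mem_univ j)
      calc P i j * xs k j ≤ P i j * 1 := mul_le_mul_of_nonneg_left hxj1 (hP i j)
      _ = P i j := mul_one _
    have hεk1 : ε k ≤ 1 := by
      rw [hε]
      rw [div_le_one (by positivity)]
      norm_num
    calc ts k = ∑ i, ts k * xs k i := h1
    _ = ∑ i, (P.mulVec (xs k) i + ε k) := by simp_rw [h2]
    _ ≤ ∑ i, ((∑ j, P i j) + 1) := Finset.sum_le_sum fun i _ => add_le_add (h3 i) hεk1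
    _ = (∑ i, ∑ j, P i j) + n := by rw [Finset.sum_add_distrib]; simp
    _ = R := hR.symm
  -- extract convergent subsequences
  obtain ⟨xl, hxlΔ, φ, hφ, hxl⟩ := (simplex_compact n).tendsto_subseq hxsΔ
  have htsmem : ∀ k, ts (φ k) ∈ Set.Icc t0 R := fun k => ⟨hts (φ k), htsR (φ k)⟩
  obtain ⟨tl, htlmem, ψ, hψ, htl⟩ := (isCompact_Icc).tendsto_subseq htsmem
  have hxl2 : Tendsto (fun k => xs (φ (ψ k))) atTop (𝓝 xl) := hxl.comp hψ.tendsto_atTop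
  have hεlim : Tendsto (fun k => ε (φ (ψ k))) atTop (𝓝 0) := by
    have h1 : Tendsto (fun m : ℕ => (1:ℝ) / (m + 1)) atTop (𝓝 0) :=
      tendsto_one_div_add_atTop_nhds_zero_nat
    exact h1.comp ((hφ.comp hψ).tendsto_atTop)
  refine ⟨tl, xl, htlmem.1, hxlΔ, ?_⟩
  ext i
  have heq : ∀ k, P.mulVec (xs (φ (ψ k))) i + ε (φ (ψ k)) = ts (φ (ψ k)) * xs (φ (ψ k)) i := by
    intro k
    have := congrFun (hxse (φ (ψ k))) i
    rw [hQmv _ _ (hxsΔ _) i] at this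
    simpa [Pi.smul_apply, smul_eq_mul] using this
  have hL : Tendsto (fun k => P.mulVec (xs (φ (ψ k))) i + ε (φ (ψ k))) atTop
      (𝓝 (P.mulVec xl i)) := by
    have := ((mulVec_cont P i).continuousAt.tendsto).comp hxl2
    simpa using this.add hεlim
  have hRt : Tendsto (fun k => ts (φ (ψ k)) * xs (φ (ψ k)) i) atTop (𝓝 (tl * xl i)) :=
    htl.mul (((continuous_apply i).continuousAt.tendsto).comp hxl2)
  have := tendsto_nhds_unique (by simpa only [heq] using hL) hRt
  simpa [Pi.smul_apply, smul_eq_mul] using this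
attribute [local instance] Matrix.linftyOpNormedRing Matrix.linftyOpNormedAlgebra

example : True := trivial

lemma entry_le_nnnorm {n : ℕ} (A : Matrix (Fin n) (Fin n) ℂ) (i j : Fin n) :
    ‖A i j‖₊ ≤ ‖A‖₊ := by
  rw [Matrix.linfty_opNNNorm_def]
  calc ‖A i j‖₊ ≤ ∑ j', ‖A i j'‖₊ :=
    Finset.single_le_sum (f := fun j' => ‖A i j'‖₊) (fun _ _ => zero_le) (Finset.mem_univ j)
  _ ≤ Finset.univ.sup fun i' => ∑ j', ‖A i' j'‖₊ := Finset.le_sup (f := fun i' => ∑ j', ‖A i' j'‖₊) (Finset.mem_univ i)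

lemma map_pow_coe {n : ℕ} (P : Matrix (Fin n) (Fin n) ℝ) (k : ℕ) :
    (P.map (fun a => (a:ℂ)))^k = (P^k).map (fun a => (a:ℂ)) := by
  have h : ∀ Q : Matrix (Fin n) (Fin n) ℝ,
      Q.map (fun a => (a:ℂ)) = (algebraMap ℝ ℂ).mapMatrix Q := fun Q => rfl
  rw [h, h, ← map_pow]


lemma pow_entries_nonneg {n : ℕ} (P : Matrix (Fin n) (Fin n) ℝ) (hP : ∀ i j, 0 ≤ P i j) :
    ∀ k i j, 0 ≤ (P^k) i j := by
  intro k
  induction k with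
  | zero => intro i j; simp [Matrix.one_apply]; split <;> norm_num
  | succ k ih =>
    intro i j
    rw [pow_succ, Matrix.mul_apply]
    exact Finset.sum_nonneg fun l _ => mul_nonneg (ih i l) (hP l j)

/-- Key lemma: for `M` Metzler and Hurwitz, `-M` is invertible with nonnegative inverse. -/
lemma metzler_hurwitz_inv {n : ℕ} (M : Matrix (Fin n) (Fin n) ℝ)
    (hM : IsMetzler M) (hH : IsHurwitz M) :
    IsUnit (-M).det ∧ ∀ i j, 0 ≤ (-M)⁻¹ i j := by
  classical
  set s : ℝ := 1 + ∑ i, |M i i| with hs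
  have hs1 : 1 ≤ s := by
    have : (0:ℝ) ≤ ∑ i, |M i i| := Finset.sum_nonneg fun i _ => abs_nonneg _
    simp only [hs]; linarith
  have hs0 : 0 < s := lt_of_lt_of_le one_pos hs1
  set P : Matrix (Fin n) (Fin n) ℝ := M + s • 1 with hPdef
  have hP : ∀ i j, 0 ≤ P i j := by
    intro i j
    by_cases hij : i = j
    · subst hij
      have h1 : |M i i| ≤ ∑ l, |M l l| :=
        Finset.single_le_sum (f := fun l => |M l l|) (fun l _ => abs_nonneg _) (Finset.mem_univ i)
      have h2 := neg_abs_le (M i i)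
      have h3 : P i i = M i i + s := by
        simp [hPdef, Matrix.add_apply, Matrix.one_apply]
      rw [h3]; simp only [hs]; linarith
    · have h3 : P i j = M i j := by
        simp [hPdef, Matrix.add_apply, Matrix.one_apply, hij]
      rw [h3]; exact hM i j hij
  set Pc : Matrix (Fin n) (Fin n) ℂ := P.map (fun a => (a:ℂ)) with hPc
  set Mc : Matrix (Fin n) (Fin n) ℂ := M.map (fun a => (a:ℂ)) with hMc
  have hPcMc : Pc = Mc + (s:ℂ) • 1 := by
    ext i j
    simp [hPc, hMc, hPdef, Matrix.map_apply, Matrix.add_apply, Matrix.smul_apply,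
      Matrix.one_apply, apply_ite (fun r : ℝ => (r:ℂ))]
  have hshift : ∀ μ : ℂ, μ ∈ spectrum ℂ Pc → (μ - s) ∈ spectrum ℂ Mc := by
    intro μ hμ
    rw [spectrum.mem_iff] at hμ ⊢
    convert hμ using 2
    rw [hPcMc]
    rw [Algebra.algebraMap_eq_smul_one, Algebra.algebraMap_eq_smul_one, sub_smul]
    abel
  have hlt : ∀ μ ∈ spectrum ℂ Pc, ‖μ‖ < s := by
    intro μ hμ
    obtain ⟨v, hv0, hv⟩ := exists_eig Pc μ hμ
    set w : Fin n → ℝ := fun i => ‖v i‖ with hw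
    have hwnn : ∀ i, 0 ≤ w i := fun i => norm_nonneg _
    set c : ℝ := ∑ i, w i with hc
    have hcpos : 0 < c := by
      obtain ⟨i, hi⟩ : ∃ i, v i ≠ 0 := by
        by_contra hcon; push_neg at hcon; exact hv0 (funext hcon)
      exact Finset.sum_pos' (fun j _ => hwnn j)
        ⟨i, Finset.mem_univ i, norm_pos_iff.mpr hi⟩
    have hineq : ∀ i, ‖μ‖ * w i ≤ P.mulVec w i := by
      intro i
      have h1 : (Pc.mulVec v) i = μ * v i := by rw [hv]; simp
      have h2 : ‖μ * v i‖ = ‖μ‖ * w i := by rw [norm_mul]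
      rw [← h2, ← h1]
      have h3 : (Pc.mulVec v) i = ∑ j, (P i j : ℂ) * v j := by
        simp [Matrix.mulVec, dotProduct, hPc, Matrix.map_apply]
      rw [h3]
      calc ‖∑ j, (P i j : ℂ) * v j‖ ≤ ∑ j, ‖(P i j : ℂ) * v j‖ := norm_sum_le _ _
      _ = ∑ j, P i j * w j := by
          refine Finset.sum_congr rfl fun j _ => ?_
          rw [norm_mul, Complex.norm_real, Real.norm_eq_abs, abs_of_nonneg (hP i j)]
      _ = P.mulVec w i := rfl
    set x0 : Fin n → ℝ := c⁻¹ • w with hx0def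
    have hx0 : x0 ∈ simplex n := by
      constructor
      · intro i; exact mul_nonneg (inv_nonneg.mpr hcpos.le) (hwnn i)
      · simp only [hx0def, Pi.smul_apply, smul_eq_mul, ← Finset.mul_sum, ← hc]
        field_simp
    have h0 : ∀ i, ‖μ‖ * x0 i ≤ P.mulVec x0 i := by
      intro i
      have hx1 : P.mulVec x0 i = c⁻¹ * P.mulVec w i := by
        rw [hx0def, Matrix.mulVec_smul]; simp
      rw [hx1]
      simp only [hx0def, Pi.smul_apply, smul_eq_mul]
      rw [mul_comm ‖μ‖ (c⁻¹ * w i), mul_assoc, mul_comm (w i) ‖μ‖]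
      exact mul_le_mul_of_nonneg_left (hineq i) (inv_nonneg.mpr hcpos.le)
    obtain ⟨t, x, htμ, hxΔ, hxe⟩ := pf_nonneg P hP ‖μ‖ x0 hx0 h0
    have htspec : (t : ℂ) ∈ spectrum ℂ Pc := by
      rw [spectrum.mem_iff]
      rw [Matrix.isUnit_iff_isUnit_det]
      intro hunit
      have hdet : (algebraMap ℂ (Matrix (Fin n) (Fin n) ℂ) (t:ℂ) - Pc).det = 0 := by
        rw [← Matrix.exists_mulVec_eq_zero_iff]
        refine ⟨fun i => ((x i : ℝ) : ℂ), ?_, ?_⟩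
        · intro hcon
          have hx1 := hxΔ.2
          have hall : ∀ i, x i = 0 := by
            intro i
            have h := congrFun hcon i
            simp only [Pi.zero_apply] at h
            exact_mod_cast h
          simp [hall] at hx1
        · ext i
          have h1 : (algebraMap ℂ (Matrix (Fin n) (Fin n) ℂ) (t:ℂ) - Pc).mulVec
              (fun i => ((x i : ℝ):ℂ)) i
              = (t:ℂ) * (x i : ℂ) - ∑ j, (P i j : ℂ) * (x j : ℂ) := by
            rw [Matrix.sub_mulVec]
            simp only [Pi.sub_apply]
            congr 1
            · simp [Matrix.algebraMap_matrix_apply, Matrix.mulVec, dotProduct,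
                Finset.sum_ite_eq, mul_comm]
          rw [h1]
          have h2 : P.mulVec x i = t * x i := by rw [hxe]; simp
          have h3 : ∑ j, (P i j : ℂ) * (x j:ℂ) = ((t * x i : ℝ) : ℂ) := by
            rw [← h2]
            simp only [Matrix.mulVec, dotProduct]
            push_cast
            rfl
          rw [h3]
          push_cast
          simp
      rw [hdet] at hunit
      exact hunit.ne_zero rfl
    have hHt := hH _ (hshift _ htspec)
    have hts : t < s := by
      have hre : ((t:ℂ) - (s:ℂ)).re = t - s := by simp
      rw [hre] at hHt; linarith
    linarith [htμ, hts]
  -- invertibility of -M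
  have hdetM : (-M).det ≠ 0 := by
    intro hdet
    have h0 : (0:ℂ) ∈ spectrum ℂ Mc := by
      rw [spectrum.mem_iff, Matrix.isUnit_iff_isUnit_det]
      intro hunit
      have hmap : ((algebraMap ℂ (Matrix (Fin n) (Fin n) ℂ)) 0 - Mc).det
          = ((-M).map (fun a => (a:ℂ))).det := by
        congr 1
        ext i j
        simp [hMc, Matrix.map_apply]
      have hdet2 : ((-M).map (fun a => (a:ℂ))).det = (((-M).det : ℝ) : ℂ) := by
        rw [show ((-M).map (fun a => (a:ℂ))) = (algebraMap ℝ ℂ).mapMatrix (-M) from rfl,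
          ← RingHom.map_det]
        rfl
      rw [hmap, hdet2, hdet] at hunit
      simpa using hunit.ne_zero
    have := hH _ h0
    simp at this
  have hdetU : IsUnit (-M).det := Ne.isUnit hdetM
  refine ⟨hdetU, ?_⟩
  -- spectral radius bound
  haveI : CompleteSpace (Matrix (Fin n) (Fin n) ℂ) := FiniteDimensional.complete ℂ _
  have hρ : spectralRadius ℂ Pc < ENNReal.ofReal s := by
    rcases Set.eq_empty_or_nonempty (spectrum ℂ Pc) with he | hne
    · have hz : spectralRadius ℂ Pc = 0 := by
        rw [spectralRadius]; simp [he]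
      rw [hz]
      exact ENNReal.ofReal_pos.mpr hs0
    · have h1 : spectralRadius ℂ Pc < (Real.toNNReal s : ENNReal) := by
        refine spectrum.spectralRadius_lt_of_forall_lt_of_nonempty hne ?_
        intro k hk
        have h2 := hlt k hk
        rw [← NNReal.coe_lt_coe]
        rw [coe_nnnorm, Real.coe_toNNReal _ hs0.le]
        exact h2
      rwa [ENNReal.ofReal]
  obtain ⟨cc, hc1, hc2⟩ := ENNReal.lt_iff_exists_nnreal_btwn.mp hρ
  have hcs : (cc:ℝ) < s := by
    rw [ENNReal.ofReal] at hc2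
    have h3 := ENNReal.coe_lt_coe.mp hc2
    calc (cc:ℝ) < (Real.toNNReal s : ℝ) := NNReal.coe_lt_coe.mpr h3
    _ = s := Real.coe_toNNReal _ hs0.le
  -- decay of powers
  have hgel := spectrum.pow_nnnorm_pow_one_div_tendsto_nhds_spectralRadius Pc
  have hev : ∀ᶠ N : ℕ in atTop, (‖Pc ^ N‖₊ : ENNReal) ^ (1/(N:ℝ)) < (cc : ENNReal) :=
    hgel.eventually_lt_const hc1
  have hev2 : ∀ᶠ N : ℕ in atTop, ∀ i j, (P^N) i j ≤ (cc:ℝ)^N := by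
    filter_upwards [hev, Filter.eventually_ge_atTop 1] with N hN hN1 i j
    have hNpos : (0:ℝ) < (N:ℝ) := by exact_mod_cast hN1
    have h1 : ((‖Pc ^ N‖₊ : ENNReal) ^ (1/(N:ℝ)))^(N:ℝ) < (cc:ENNReal)^(N:ℝ) :=
      ENNReal.rpow_lt_rpow hN hNpos
    rw [← ENNReal.rpow_mul, one_div, inv_mul_cancel₀ hNpos.ne', ENNReal.rpow_one] at h1
    rw [ENNReal.rpow_natCast, ← ENNReal.coe_pow] at h1
    have h2 : ‖Pc ^ N‖₊ < cc ^ N := ENNReal.coe_lt_coe.mp h1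
    have h3 : ‖Pc ^ N‖ ≤ (cc:ℝ)^N := by
      have := NNReal.coe_lt_coe.mpr h2
      rw [coe_nnnorm, NNReal.coe_pow] at this
      exact this.le
    have h4 : (P^N) i j ≤ ‖(Pc^N) i j‖ := by
      rw [map_pow_coe, Matrix.map_apply, Complex.norm_real, Real.norm_eq_abs]
      exact le_abs_self _
    have h5 : ‖(Pc^N) i j‖ ≤ ‖Pc^N‖ := by
      have := entry_le_nnnorm (Pc^N) i j
      exact_mod_cast this
    linarith
  -- Neumann series
  set Minv := (-M)⁻¹ with hMinvdef
  have hNmul : Minv * (-M) = 1 := Matrix.nonsing_inv_mul _ hdetU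
  have hMP : -M = s • (1 : Matrix (Fin n) (Fin n) ℝ) - P := by
    rw [hPdef]; abel
  set f : ℕ → Matrix (Fin n) (Fin n) ℝ := fun k => (s⁻¹)^k • P^k with hf
  have htel : ∀ N, (-M) * (∑ k ∈ Finset.range N, (s⁻¹)^(k+1) • P^k) = 1 - f N := by
    intro N
    rw [Finset.mul_sum]
    have hterm : ∀ k, (-M) * ((s⁻¹)^(k+1) • P^k) = f k - f (k+1) := by
      intro k
      rw [Matrix.mul_smul, hMP, Matrix.sub_mul, Matrix.smul_mul, Matrix.one_mul, smul_sub]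
      congr 1
      · rw [smul_smul, hf]
        simp only
        congr 1
        field_simp
        ring_nf
        rw [mul_inv_cancel₀ hs0.ne', one_mul]
      · rw [hf]
        simp only
        congr 1
        exact (pow_succ' P k).symm
    calc ∑ k ∈ Finset.range N, (-M) * ((s⁻¹)^(k+1) • P^k)
        = ∑ k ∈ Finset.range N, (f k - f (k+1)) := by simp_rw [hterm]
    _ = f 0 - f N := Finset.sum_range_sub' f N
    _ = 1 - f N := by rw [hf]; simp only; rw [pow_zero, pow_zero, one_smul]
  have hSN : ∀ N, (∑ k ∈ Finset.range N, (s⁻¹)^(k+1) • P^k)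
      = Minv - (s⁻¹)^N • (Minv * P^N) := by
    intro N
    have h1 : Minv * ((-M) * (∑ k ∈ Finset.range N, (s⁻¹)^(k+1) • P^k))
        = ∑ k ∈ Finset.range N, (s⁻¹)^(k+1) • P^k := by
      rw [← Matrix.mul_assoc, hNmul, Matrix.one_mul]
    rw [htel, Matrix.mul_sub, Matrix.mul_one, hf] at h1
    simp only at h1
    rw [Matrix.mul_smul] at h1
    exact h1.symm
  intro i j
  have hnn : ∀ N, 0 ≤ (∑ k ∈ Finset.range N, (s⁻¹)^(k+1) • P^k) i j := by
    intro N
    rw [Matrix.sum_apply]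
    refine Finset.sum_nonneg fun k _ => ?_
    rw [Matrix.smul_apply, smul_eq_mul]
    exact mul_nonneg (pow_nonneg (inv_nonneg.mpr hs0.le) _) (pow_entries_nonneg P hP k i j)
  have hterm0 : Tendsto (fun N : ℕ => ((s⁻¹)^N • (Minv * P^N)) i j) atTop (𝓝 0) := by
    set K : ℝ := ∑ l, |Minv i l| with hK
    have hKnn : 0 ≤ K := Finset.sum_nonneg fun l _ => abs_nonneg _
    have hg : Tendsto (fun N : ℕ => K * ((cc:ℝ)/s)^N) atTop (𝓝 0) := by
      have hlim : Tendsto (fun N : ℕ => ((cc:ℝ)/s)^N) atTop (𝓝 0) :=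
        tendsto_pow_atTop_nhds_zero_of_lt_one (by positivity)
          (by rw [div_lt_one hs0]; exact hcs)
      have h5 := hlim.const_mul K
      simpa using h5
    refine squeeze_zero_norm' ?_ hg
    · filter_upwards [hev2] with N hN
      rw [Matrix.smul_apply, smul_eq_mul, Real.norm_eq_abs, abs_mul, abs_pow, abs_inv,
        abs_of_nonneg hs0.le]
      have hb : |(Minv * P^N) i j| ≤ K * (cc:ℝ)^N := by
        rw [Matrix.mul_apply]
        calc |∑ l, Minv i l * (P^N) l j| ≤ ∑ l, |Minv i l * (P^N) l j| :=
          Finset.abs_sum_le_sum_abs _ _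
        _ = ∑ l, |Minv i l| * (P^N) l j := by
            refine Finset.sum_congr rfl fun l _ => ?_
            rw [abs_mul, abs_of_nonneg (pow_entries_nonneg P hP N l j)]
        _ ≤ ∑ l, |Minv i l| * (cc:ℝ)^N :=
            Finset.sum_le_sum fun l _ =>
              mul_le_mul_of_nonneg_left (hN l j) (abs_nonneg _)
        _ = K * (cc:ℝ)^N := by rw [hK, Finset.sum_mul]
      have hcc0 : (0:ℝ) ≤ (cc:ℝ) := cc.coe_nonneg
      calc (s⁻¹)^N * |(Minv * P^N) i j| ≤ (s⁻¹)^N * (K * (cc:ℝ)^N) :=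
        mul_le_mul_of_nonneg_left hb (pow_nonneg (inv_nonneg.mpr hs0.le) _)
      _ = K * ((cc:ℝ)/s)^N := by rw [div_pow]; ring
  have hfinal : Tendsto (fun N : ℕ => (∑ k ∈ Finset.range N, (s⁻¹)^(k+1) • P^k) i j)
      atTop (𝓝 (Minv i j)) := by
    have heq : ∀ N : ℕ, (∑ k ∈ Finset.range N, (s⁻¹)^(k+1) • P^k) i j
        = Minv i j - ((s⁻¹)^N • (Minv * P^N)) i j := by
      intro N
      rw [hSN N, Matrix.sub_apply]
    simp_rw [heq]
    simpa using tendsto_const_nhds.sub hterm0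
  exact ge_of_tendsto' hfinal hnn

/-- linear dissipativity lemma, direction (ii) ⟹ (i), with the explicit choice
`p⊤ := q⊤ C (−(A+ξI))⁻¹`, `l := 0`, `k := r − G(−ξ)⊤ q`. -/
theorem stmt1 {n m p : ℕ}
    (A : Matrix (Fin n) (Fin n) ℝ) (B : Matrix (Fin n) (Fin m) ℝ)
    (C : Matrix (Fin p) (Fin n) ℝ) (D : Matrix (Fin p) (Fin m) ℝ)
    (hA : IsMetzler A) (hB : ∀ i j, 0 ≤ B i j) (hC : ∀ i j, 0 ≤ C i j)
    (hD : ∀ i j, 0 ≤ D i j)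
    (ξ : ℝ) (hξ : 0 ≤ ξ) (hHur : IsHurwitz (A + ξ • (1 : Matrix (Fin n) (Fin n) ℝ)))
    (r : Fin m → ℝ) (q : Fin p → ℝ) (hr : ∀ i, 0 ≤ r i) (hq : ∀ i, 0 ≤ q i)
    (hrq : ∀ j, 0 ≤ r j -
      vecMul q (C * (-(ξ • (1 : Matrix (Fin n) (Fin n) ℝ)) - A)⁻¹ * B + D) j) :
    (∃ pv l : Fin n → ℝ, ∃ k : Fin m → ℝ,
      (∀ i, 0 ≤ pv i) ∧ (∀ i, 0 ≤ l i) ∧ (∀ i, 0 ≤ k i) ∧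
      (∀ j, vecMul pv A j + ξ * pv j + vecMul q C j + l j = 0) ∧
      (∀ j, vecMul pv B j + vecMul q D j - r j + k j = 0)) ∧
    (∀ i, 0 ≤ vecMul q (C * (-(A + ξ • (1 : Matrix (Fin n) (Fin n) ℝ)))⁻¹) i) ∧
    (∀ j, 0 ≤ r j -
        vecMul q (C * (-(ξ • (1 : Matrix (Fin n) (Fin n) ℝ)) - A)⁻¹ * B + D) j) ∧
    (∀ j, vecMul (vecMul q (C * (-(A + ξ • (1 : Matrix (Fin n) (Fin n) ℝ)))⁻¹)) A j +
        ξ * vecMul q (C * (-(A + ξ • (1 : Matrix (Fin n) (Fin n) ℝ)))⁻¹) j +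
        vecMul q C j + (0 : Fin n → ℝ) j = 0) ∧
    (∀ j, vecMul (vecMul q (C * (-(A + ξ • (1 : Matrix (Fin n) (Fin n) ℝ)))⁻¹)) B j +
        vecMul q D j - r j +
        (r j - vecMul q (C * (-(ξ • (1 : Matrix (Fin n) (Fin n) ℝ)) - A)⁻¹ * B + D) j) = 0) := by
  classical
  set Mz := A + ξ • (1 : Matrix (Fin n) (Fin n) ℝ) with hMz
  have hMzMetzler : IsMetzler Mz := by
    intro i j hij
    have h1 : Mz i j = A i j + ξ * (if i = j then 1 else 0) := by
      simp [hMz, Matrix.add_apply, Matrix.one_apply]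
    rw [h1, if_neg hij, mul_zero, add_zero]
    exact hA i j hij
  obtain ⟨hdetU, hinv⟩ := metzler_hurwitz_inv Mz hMzMetzler hHur
  have hNeq : (-(ξ • (1 : Matrix (Fin n) (Fin n) ℝ)) - A) = -Mz := by rw [hMz]; abel
  set N := -Mz with hN
  have hNinv : N⁻¹ * Mz = -1 := by
    have h1 : N⁻¹ * N = 1 := Matrix.nonsing_inv_mul _ hdetU
    have h2 : N⁻¹ * Mz = N⁻¹ * (-N) := by rw [hN, neg_neg]
    rw [h2, Matrix.mul_neg, h1]
  set pv := vecMul q (C * N⁻¹) with hpv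
  have hpvnn : ∀ i, 0 ≤ pv i := by
    intro i
    rw [hpv]
    simp only [Matrix.vecMul, dotProduct]
    refine Finset.sum_nonneg fun l _ => mul_nonneg (hq l) ?_
    rw [Matrix.mul_apply]
    exact Finset.sum_nonneg fun k _ => mul_nonneg (hC l k) (hinv k i)
  have hvm : vecMul pv Mz = - vecMul q C := by
    rw [hpv, Matrix.vecMul_vecMul, Matrix.mul_assoc, hNinv, Matrix.mul_neg, Matrix.mul_one,
      Matrix.vecMul_neg]
  have hconj4 : ∀ j, vecMul pv A j + ξ * pv j + vecMul q C j + (0 : Fin n → ℝ) j = 0 := by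
    intro j
    have h2 : vecMul pv (ξ • (1 : Matrix (Fin n) (Fin n) ℝ)) j = ξ * pv j := by
      simp only [Matrix.vecMul, dotProduct, Matrix.smul_apply, Matrix.one_apply, smul_eq_mul,
        mul_ite, mul_one, mul_zero, Finset.sum_ite_eq', Finset.mem_univ, if_true]
      ring
    have h1 : vecMul pv Mz j = vecMul pv A j + ξ * pv j := by
      rw [hMz, Matrix.vecMul_add]
      simp only [Pi.add_apply]
      rw [h2]
    have h3 := congrFun hvm j
    rw [h1] at h3
    simp only [Pi.neg_apply] at h3
    simp only [Pi.zero_apply]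
    linarith [h3]
  have hBeq : ∀ j, vecMul pv B j
      = vecMul q (C * (-(ξ • (1 : Matrix (Fin n) (Fin n) ℝ)) - A)⁻¹ * B + D) j
        - vecMul q D j := by
    intro j
    rw [hNeq, Matrix.vecMul_add]
    simp only [Pi.add_apply]
    rw [hpv, Matrix.vecMul_vecMul]
    ring
  have hconj5 : ∀ j, vecMul pv B j + vecMul q D j - r j +
      (r j - vecMul q (C * (-(ξ • (1 : Matrix (Fin n) (Fin n) ℝ)) - A)⁻¹ * B + D) j) = 0 := by
    intro j
    rw [hBeq j]
    ring
  refine ⟨⟨pv, 0, fun j => r j -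
      vecMul q (C * (-(ξ • (1 : Matrix (Fin n) (Fin n) ℝ)) - A)⁻¹ * B + D) j,
      hpvnn, fun i => le_rfl, hrq, hconj4, hconj5⟩, hpvnn, hrq, hconj4, hconj5⟩
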